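/- For integers m ≥ r+1 ≥ 2, let G be the bipartite graph whose two parts A and B each consist of all nonempty subsets of [m] of size at most r, where S ∈ A is adjacent to T ∈ B iff S ∩ T = ∅ and |S| + |T| ≥ r+1. Then G has a perfect matching. -/

import Mathlib

open Finset

namespace Stmt8Aux

lemma choose_le_half (m a : ℕ) : ∀ c, a ≤ c → 2 * c ≤ m → m.choose a ≤ m.choose c := by
  intro c hac
  induction c, hac using Nat.le_induction with
  | base => intro _; exact le_refl _
  | succ c hc' ih =>
      intro h2
      exact (ih (by omega)).trans (Nat.choose_le_succ_of_lt_half_left (by omega))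

lemma choose_le_choose' (m a b : ℕ) (hab : a ≤ b) (h : a + b ≤ m) :
    m.choose a ≤ m.choose b := by
  rcases le_total (2 * b) m with h2 | h2
  · exact choose_le_half m a b hab h2
  · have hbm : b ≤ m := by omega
    rw [← Nat.choose_symm hbm]
    exact choose_le_half m a (m - b) (by omega) (by omega)

/-- partial sums of binomials over sizes 1..i -/
def SN (m i : ℕ) : ℕ := ∑ t ∈ Finset.Ioc 0 i, m.choose t

lemma SN_mono (m : ℕ) {i i' : ℕ} (h : i ≤ i') : SN m i ≤ SN m i' :=
  Finset.sum_le_sum_of_subset (Finset.Ioc_subset_Ioc_right h)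

lemma SN_split (m : ℕ) {i i' : ℕ} (h : i ≤ i') :
    SN m i' = SN m i + ∑ t ∈ Finset.Ioc i i', m.choose t := by
  rw [SN, SN, ← Finset.sum_union (by rw [Finset.disjoint_left]; intro x hx hx'; simp only [Finset.mem_Ioc] at hx hx'; omega),
    Finset.Ioc_union_Ioc_eq_Ioc (Nat.zero_le i) h]

lemma lemA_half (m r k j : ℕ) (hkj : k ≤ j) (hjr : k + j ≤ r) (hm : r + 1 ≤ m) :
    SN m k + SN m j ≤ SN m r := by
  have h1 : SN m k ≤ ∑ t ∈ Finset.Ioc (r - k) r, m.choose t := by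
    have h2 : SN m k ≤ ∑ i ∈ Finset.Ioc 0 k, m.choose (r + 1 - i) := by
      apply Finset.sum_le_sum
      intro i hi
      simp only [Finset.mem_Ioc] at hi
      exact choose_le_choose' m i (r + 1 - i) (by omega) (by omega)
    refine h2.trans_eq ?_
    apply Finset.sum_nbij' (fun i => r + 1 - i) (fun t => r + 1 - t)
    · intro i hi; simp only [Finset.mem_Ioc] at *; omega
    · intro t ht; simp only [Finset.mem_Ioc] at *; omega
    · intro i hi; simp only [Finset.mem_Ioc] at hi; omega
    · intro t ht; simp only [Finset.mem_Ioc] at ht; omega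
    · intro i hi; rfl
  have h2 : SN m j ≤ SN m (r - k) := SN_mono m (by omega)
  have h3 := SN_split m (show r - k ≤ r by omega)
  omega

lemma lemA (m r k j : ℕ) (hjr : k + j ≤ r) (hm : r + 1 ≤ m) :
    SN m k + SN m j ≤ SN m r := by
  rcases le_total k j with h | h
  · exact lemA_half m r k j h hjr hm
  · have := lemA_half m r j k h (by omega) hm; omega

lemma lemB (m r k j : ℕ) (hk : 1 ≤ k) (hkr : k ≤ r) (hj : 1 ≤ j) (hjr : j ≤ r)
    (hkj : m + 1 ≤ k + j) (hm : r + 1 ≤ m) :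
    SN m r ≤ SN m (k - 1) + SN m (j - 1) := by
  have h3 := SN_split m (show k - 1 ≤ r by omega)
  have h1 : ∑ t ∈ Finset.Ioc (k - 1) r, m.choose t
      ≤ SN m (j - 1) := by
    have e1 : ∑ t ∈ Finset.Ioc (k - 1) r, m.choose t
        = ∑ s ∈ (Finset.Ioc (k - 1) r).image (fun t => m - t), m.choose s := by
      rw [Finset.sum_image ?_]
      swap
      · intro a ha b hb hab
        simp only [Finset.mem_coe, Finset.mem_Ioc] at ha hb
        beta_reduce at hab
        omega
      apply Finset.sum_congr rfl
      intro t ht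
      simp only [Finset.mem_Ioc] at ht
      exact (Nat.choose_symm (by omega)).symm
    rw [e1]
    apply Finset.sum_le_sum_of_subset
    intro s hs
    simp only [Finset.mem_image, Finset.mem_Ioc] at hs ⊢
    obtain ⟨t, ht, rfl⟩ := hs
    omega
  omega

def AZ (m i : ℕ) : ℤ := (SN m i : ℤ)

lemma AZ_mono (m : ℕ) {i i' : ℕ} (h : i ≤ i') : AZ m i ≤ AZ m i' := by
  simp only [AZ, Nat.cast_le]
  exact SN_mono m h

lemma AZ_nonneg (m i : ℕ) : 0 ≤ AZ m i := Int.natCast_nonneg _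

lemma AZ_zero (m : ℕ) : AZ m 0 = 0 := by simp [AZ, SN]

lemma AZ_succ (m k : ℕ) (hk : 1 ≤ k) : AZ m k - AZ m (k - 1) = (m.choose k : ℤ) := by
  have := SN_split m (show k - 1 ≤ k by omega)
  have e : Finset.Ioc (k - 1) k = {k} := by
    ext x; simp only [Finset.mem_Ioc, Finset.mem_singleton]; omega
  rw [e, Finset.sum_singleton] at this
  simp only [AZ, this]
  push_cast
  ring

/-- the transport plan between levels -/
def Tm (m r k j : ℕ) : ℤ :=
  max 0 (min (AZ m k) (AZ m r - AZ m (j - 1)) - max (AZ m (k - 1)) (AZ m r - AZ m j))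

lemma Tm_nonneg (m r k j : ℕ) : 0 ≤ Tm m r k j := le_max_left _ _

lemma clamp_eq (a b c d : ℤ) (hab : a ≤ b) (hcd : c ≤ d) :
    max 0 (min b d - max a c) = min b (max a d) - min b (max a c) := by
  rcases le_total d a with h | h <;> rcases le_total c b with h' | h' <;>
    simp [min_def, max_def] <;> split_ifs <;> omega

lemma Tm_eq_zero_low (m r k j : ℕ) (hk : 1 ≤ k) (hj : 1 ≤ j) (h : k + j ≤ r)
    (hm : r + 1 ≤ m) : Tm m r k j = 0 := by
  have hA : AZ m k + AZ m j ≤ AZ m r := by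
    have := lemA m r k j h hm
    simp only [AZ]; exact_mod_cast this
  have h1 : min (AZ m k) (AZ m r - AZ m (j - 1)) - max (AZ m (k - 1)) (AZ m r - AZ m j) ≤ 0 := by
    have := min_le_left (AZ m k) (AZ m r - AZ m (j - 1))
    have := le_max_right (AZ m (k - 1)) (AZ m r - AZ m j)
    omega
  simp only [Tm]
  omega

lemma Tm_eq_zero_high (m r k j : ℕ) (hk : 1 ≤ k) (hkr : k ≤ r) (hj : 1 ≤ j) (hjr : j ≤ r)
    (h : m + 1 ≤ k + j) (hm : r + 1 ≤ m) : Tm m r k j = 0 := by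
  have hA : AZ m r ≤ AZ m (k - 1) + AZ m (j - 1) := by
    have := lemB m r k j hk hkr hj hjr h hm
    simp only [AZ]; exact_mod_cast this
  have h1 : min (AZ m k) (AZ m r - AZ m (j - 1)) - max (AZ m (k - 1)) (AZ m r - AZ m j) ≤ 0 := by
    have := min_le_right (AZ m k) (AZ m r - AZ m (j - 1))
    have := le_max_left (AZ m (k - 1)) (AZ m r - AZ m j)
    omega
  simp only [Tm]
  omega

lemma Tm_row (m r k : ℕ) (hk : 1 ≤ k) (hkr : k ≤ r) :
    ∑ j ∈ Finset.Ioc 0 r, Tm m r k j = (m.choose k : ℤ) := by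
  have hab : AZ m (k - 1) ≤ AZ m k := AZ_mono m (by omega)
  set F : ℕ → ℤ := fun j => min (AZ m k) (max (AZ m (k - 1)) (AZ m r - AZ m j)) with hF
  have hterm : ∀ j ∈ Finset.Ioc 0 r, Tm m r k j = F (j - 1) - F j := by
    intro j hj
    simp only [Finset.mem_Ioc] at hj
    rw [Tm, clamp_eq _ _ _ _ hab (by
      have : AZ m (j - 1) ≤ AZ m j := AZ_mono m (by omega)
      omega)]
  rw [Finset.sum_congr rfl hterm]
  have e : ∑ j ∈ Finset.Ioc 0 r, (F (j - 1) - F j) = ∑ i ∈ Finset.range r, (F i - F (i + 1)) := by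
    apply Finset.sum_nbij' (fun j => j - 1) (fun i => i + 1)
    · intro j hj; simp only [Finset.mem_Ioc, Finset.mem_range] at *; omega
    · intro i hi; simp only [Finset.mem_Ioc, Finset.mem_range] at *; omega
    · intro j hj; simp only [Finset.mem_Ioc] at hj; omega
    · intro i hi; omega
    · intro j hj
      simp only [Finset.mem_Ioc] at hj
      have : j - 1 + 1 = j := by omega
      rw [this]
  rw [e, Finset.sum_range_sub' F]
  have hF0 : F 0 = AZ m k := by
    simp only [hF, AZ_zero, sub_zero]
    rw [max_eq_right (AZ_mono m (by omega)), min_eq_left (AZ_mono m hkr)]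
  have hFr : F r = AZ m (k - 1) := by
    simp only [hF, sub_self]
    rw [max_eq_left (AZ_nonneg m _), min_eq_right hab]
  rw [hF0, hFr, AZ_succ m k hk]

lemma Tm_col (m r j : ℕ) (hj : 1 ≤ j) (hjr : j ≤ r) :
    ∑ k ∈ Finset.Ioc 0 r, Tm m r k j = (m.choose j : ℤ) := by
  have hcd : AZ m r - AZ m j ≤ AZ m r - AZ m (j - 1) := by
    have : AZ m (j - 1) ≤ AZ m j := AZ_mono m (by omega)
    omega
  set G : ℕ → ℤ := fun k => min (AZ m r - AZ m (j - 1)) (max (AZ m r - AZ m j) (AZ m k)) with hG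
  have hterm : ∀ k ∈ Finset.Ioc 0 r, Tm m r k j = G k - G (k - 1) := by
    intro k hk
    simp only [Finset.mem_Ioc] at hk
    have hab : AZ m (k - 1) ≤ AZ m k := AZ_mono m (by omega)
    rw [Tm]
    rw [show min (AZ m k) (AZ m r - AZ m (j-1)) = min (AZ m r - AZ m (j-1)) (AZ m k) from min_comm _ _,
        show max (AZ m (k-1)) (AZ m r - AZ m j) = max (AZ m r - AZ m j) (AZ m (k-1)) from max_comm _ _]
    exact clamp_eq _ _ _ _ hcd hab
  rw [Finset.sum_congr rfl hterm]
  have e : ∑ k ∈ Finset.Ioc 0 r, (G k - G (k - 1)) = ∑ i ∈ Finset.range r, (G (i + 1) - G i) := by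
    apply Finset.sum_nbij' (fun k => k - 1) (fun i => i + 1)
    · intro k hk; simp only [Finset.mem_Ioc, Finset.mem_range] at *; omega
    · intro i hi; simp only [Finset.mem_Ioc, Finset.mem_range] at *; omega
    · intro k hk; simp only [Finset.mem_Ioc] at hk; omega
    · intro i hi; omega
    · intro k hk
      simp only [Finset.mem_Ioc] at hk
      have : k - 1 + 1 = k := by omega
      rw [this]
  rw [e, Finset.sum_range_sub G]
  have hG0 : G 0 = AZ m r - AZ m j := by
    have h1 : max (AZ m r - AZ m j) (AZ m 0) = AZ m r - AZ m j := by
      rw [AZ_zero]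
      exact max_eq_left (show AZ m 0 ≤ AZ m r - AZ m j by rw [AZ_zero]; have := AZ_mono m hjr; omega)
    simp only [hG, h1, min_eq_right hcd]
  have hGr : G r = AZ m r - AZ m (j - 1) := by
    have h1 : max (AZ m r - AZ m j) (AZ m r) = AZ m r := by
      exact max_eq_right (show AZ m r - AZ m j ≤ AZ m r by have := AZ_nonneg m j; omega)
    have h2 : min (AZ m r - AZ m (j - 1)) (AZ m r) = AZ m r - AZ m (j - 1) := by
      exact min_eq_left (show AZ m r - AZ m (j - 1) ≤ AZ m r by
        have := AZ_nonneg m (j - 1); omega)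
    simp only [hG, h1, h2]
  rw [hG0, hGr]
  have := AZ_succ m j hj
  omega

section Graph

variable (m r : ℕ)

abbrev Idx := {S : Finset (Fin m) // S.Nonempty ∧ S.card ≤ r}

def nbr (S : Idx m r) : Finset (Idx m r) :=
  Finset.univ.filter (fun T => Disjoint S.1 T.1 ∧ r + 1 ≤ S.1.card + T.1.card)

lemma mem_nbr (S T : Idx m r) :
    T ∈ nbr m r S ↔ Disjoint S.1 T.1 ∧ r + 1 ≤ S.1.card + T.1.card := by
  simp [nbr]

lemma nbr_symm (S T : Idx m r) : T ∈ nbr m r S ↔ S ∈ nbr m r T := by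
  simp only [mem_nbr]
  constructor
  · rintro ⟨h1, h2⟩; exact ⟨h1.symm, by omega⟩
  · rintro ⟨h1, h2⟩; exact ⟨h1.symm, by omega⟩

lemma card_compl' (S : Idx m r) : (S.1ᶜ).card = m - S.1.card := by
  rw [Finset.card_compl, Fintype.card_fin]

lemma card_fiber (S : Idx m r) (j : ℕ) (hj : 0 < j) (hjr : j ≤ r) :
    ((nbr m r S).filter (fun T => T.1.card = j)).card
      = if r + 1 ≤ S.1.card + j then (m - S.1.card).choose j else 0 := by
  split_ifs with hc
  · rw [← card_compl' m r S, ← Finset.card_powersetCard j (S.1ᶜ)]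
    apply Finset.card_bij (fun T _ => T.1)
    · intro T hT
      simp only [Finset.mem_filter, mem_nbr] at hT
      rw [Finset.mem_powersetCard]
      constructor
      · intro x hx
        rw [Finset.mem_compl]
        intro hxS
        exact (Finset.disjoint_left.mp hT.1.1 hxS) hx
      · exact hT.2
    · intro T hT T' hT' h
      exact Subtype.ext h
    · intro Z hZ
      rw [Finset.mem_powersetCard] at hZ
      have hZcard : Z.card = j := hZ.2
      have hZne : Z.Nonempty := Finset.card_pos.mp (by omega)
      refine ⟨⟨Z, hZne, by omega⟩, ?_, rfl⟩
      simp only [Finset.mem_filter, mem_nbr]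
      refine ⟨⟨?_, by simpa [hZcard] using hc⟩, hZcard⟩
      rw [Finset.disjoint_right]
      intro x hxZ
      have := hZ.1 hxZ
      rw [Finset.mem_compl] at this
      exact this
  · rw [Finset.card_eq_zero, Finset.eq_empty_iff_forall_notMem]
    intro T hT
    simp only [Finset.mem_filter, mem_nbr] at hT
    omega

def wt (k j : ℕ) : ℚ := (Tm m r k j : ℚ) / ((m.choose k : ℚ) * ((m - k).choose j : ℚ))

lemma wt_nonneg (k j : ℕ) : 0 ≤ wt m r k j := by
  apply div_nonneg
  · exact_mod_cast Tm_nonneg m r k j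
  · positivity

lemma sum_nbr (S : Idx m r) (G : ℕ → ℚ) :
    ∑ T ∈ nbr m r S, G T.1.card
      = ∑ j ∈ Finset.Ioc 0 r,
          (if r + 1 ≤ S.1.card + j then ((m - S.1.card).choose j : ℚ) else 0) * G j := by
  rw [← Finset.sum_fiberwise_of_maps_to (g := fun T : Idx m r => T.1.card)
      (t := Finset.Ioc 0 r) (fun T hT => by
        simp only [Finset.mem_Ioc]
        exact ⟨Finset.card_pos.mpr T.2.1, T.2.2⟩)]
  apply Finset.sum_congr rfl
  intro j hj
  simp only [Finset.mem_Ioc] at hj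
  have e1 : ∑ T ∈ (nbr m r S).filter (fun T => T.1.card = j), G T.1.card
      = ∑ _T ∈ (nbr m r S).filter (fun T => T.1.card = j), G j := by
    apply Finset.sum_congr rfl
    intro T hT
    simp only [Finset.mem_filter] at hT
    rw [hT.2]
  rw [e1, Finset.sum_const, card_fiber m r S j hj.1 hj.2, nsmul_eq_mul]
  congr 1
  split_ifs with hc <;> simp

end Graph

section Sums

variable (m r : ℕ) (hr : 1 ≤ r) (hm : r + 1 ≤ m)

lemma choose_prod_id (k j : ℕ) (hkj : k + j ≤ m) :
    m.choose k * (m - k).choose j = m.choose j * (m - j).choose k := by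
  have h1 := Nat.choose_mul (n := m) (k := k + j) (s := k) (by omega)
  have h2 := Nat.choose_mul (n := m) (k := k + j) (s := j) (by omega)
  have e1 : k + j - k = j := by omega
  have e2 : k + j - j = k := by omega
  have e3 : (k + j).choose k = (k + j).choose j := by
    rw [← Nat.choose_symm (show k ≤ k + j by omega), e1]
  rw [e1] at h1
  rw [e2] at h2
  rw [e3] at h1
  omega

include hr hm in
lemma row_term (k j : ℕ) (hk1 : 1 ≤ k) (hkr : k ≤ r) (hj1 : 1 ≤ j) (hjr : j ≤ r) :
    (if r + 1 ≤ k + j then ((m - k).choose j : ℚ) else 0) * wt m r k j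
      = (Tm m r k j : ℚ) / (m.choose k : ℚ) := by
  split_ifs with hc
  · by_cases hm2 : k + j ≤ m
    · have h1 : ((m - k).choose j : ℚ) ≠ 0 := by
        have : 0 < (m - k).choose j := Nat.choose_pos (by omega)
        exact_mod_cast this.ne'
      have h2 : (m.choose k : ℚ) ≠ 0 := by
        have : 0 < m.choose k := Nat.choose_pos (by omega)
        exact_mod_cast this.ne'
      rw [wt]
      field_simp
    · have hT0 : Tm m r k j = 0 := Tm_eq_zero_high m r k j hk1 hkr hj1 hjr (by omega) hm
      simp [wt, hT0]
  · have hT0 : Tm m r k j = 0 := Tm_eq_zero_low m r k j hk1 hj1 (by omega) hm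
    simp [wt, hT0]

include hr hm in
lemma col_term (k j : ℕ) (hk1 : 1 ≤ k) (hkr : k ≤ r) (hj1 : 1 ≤ j) (hjr : j ≤ r) :
    (if r + 1 ≤ j + k then ((m - j).choose k : ℚ) else 0) * wt m r k j
      = (Tm m r k j : ℚ) / (m.choose j : ℚ) := by
  split_ifs with hc
  · by_cases hm2 : k + j ≤ m
    · have h1 : ((m - k).choose j : ℚ) ≠ 0 := by
        have : 0 < (m - k).choose j := Nat.choose_pos (by omega)
        exact_mod_cast this.ne'
      have h2 : (m.choose k : ℚ) ≠ 0 := by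
        have : 0 < m.choose k := Nat.choose_pos (by omega)
        exact_mod_cast this.ne'
      have h3 : (m.choose j : ℚ) ≠ 0 := by
        have : 0 < m.choose j := Nat.choose_pos (by omega)
        exact_mod_cast this.ne'
      have hid : (m.choose k : ℚ) * ((m - k).choose j : ℚ)
          = (m.choose j : ℚ) * ((m - j).choose k : ℚ) := by
        exact_mod_cast congrArg (Nat.cast : ℕ → ℚ) (choose_prod_id m k j hm2)
      have h4 : ((m - j).choose k : ℚ) ≠ 0 := by
        have : 0 < (m - j).choose k := Nat.choose_pos (by omega)
        exact_mod_cast this.ne'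
      rw [wt, hid]
      field_simp
    · have hT0 : Tm m r k j = 0 := Tm_eq_zero_high m r k j hk1 hkr hj1 hjr (by omega) hm
      simp [wt, hT0]
  · have hT0 : Tm m r k j = 0 := Tm_eq_zero_low m r k j hk1 hj1 (by omega) hm
    simp [wt, hT0]

end Sums

section Main

variable (m r : ℕ)

lemma row_sum (hr : 1 ≤ r) (hm : r + 1 ≤ m) (S : Idx m r) :
    ∑ T ∈ nbr m r S, wt m r S.1.card T.1.card = 1 := by
  have hk1 : 1 ≤ S.1.card := Finset.card_pos.mpr S.2.1
  have hkr : S.1.card ≤ r := S.2.2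
  rw [sum_nbr m r S (fun j => wt m r S.1.card j)]
  have e1 : ∀ j ∈ Finset.Ioc 0 r,
      (if r + 1 ≤ S.1.card + j then ((m - S.1.card).choose j : ℚ) else 0) * wt m r S.1.card j
        = (Tm m r S.1.card j : ℚ) / (m.choose S.1.card : ℚ) := by
    intro j hj
    simp only [Finset.mem_Ioc] at hj
    exact row_term m r hr hm S.1.card j hk1 hkr hj.1 hj.2
  rw [Finset.sum_congr rfl e1, ← Finset.sum_div]
  have e2 : ∑ j ∈ Finset.Ioc 0 r, (Tm m r S.1.card j : ℚ) = (m.choose S.1.card : ℚ) := by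
    have := Tm_row m r S.1.card hk1 hkr
    push_cast [← this]
    norm_cast
  rw [e2, div_self]
  have : 0 < m.choose S.1.card := Nat.choose_pos (by omega)
  exact_mod_cast this.ne'

lemma col_sum (hr : 1 ≤ r) (hm : r + 1 ≤ m) (T : Idx m r) :
    ∑ S ∈ nbr m r T, wt m r S.1.card T.1.card = 1 := by
  have hj1 : 1 ≤ T.1.card := Finset.card_pos.mpr T.2.1
  have hjr : T.1.card ≤ r := T.2.2
  rw [sum_nbr m r T (fun k => wt m r k T.1.card)]
  have e1 : ∀ k ∈ Finset.Ioc 0 r,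
      (if r + 1 ≤ T.1.card + k then ((m - T.1.card).choose k : ℚ) else 0) * wt m r k T.1.card
        = (Tm m r k T.1.card : ℚ) / (m.choose T.1.card : ℚ) := by
    intro k hk
    simp only [Finset.mem_Ioc] at hk
    exact col_term m r hr hm k T.1.card hk.1 hk.2 hj1 hjr
  rw [Finset.sum_congr rfl e1, ← Finset.sum_div]
  have e2 : ∑ k ∈ Finset.Ioc 0 r, (Tm m r k T.1.card : ℚ) = (m.choose T.1.card : ℚ) := by
    have := Tm_col m r T.1.card hj1 hjr
    push_cast [← this]
    norm_cast
  rw [e2, div_self]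
  have : 0 < m.choose T.1.card := Nat.choose_pos (by omega)
  exact_mod_cast this.ne'

lemma hall_cond (hr : 1 ≤ r) (hm : r + 1 ≤ m) (s : Finset (Idx m r)) :
    s.card ≤ (s.biUnion (nbr m r)).card := by
  have key : (s.card : ℚ) ≤ ((s.biUnion (nbr m r)).card : ℚ) := by
    calc (s.card : ℚ) = ∑ S ∈ s, (1 : ℚ) := by simp
    _ = ∑ S ∈ s, ∑ T ∈ nbr m r S, wt m r S.1.card T.1.card :=
        Finset.sum_congr rfl (fun S _ => (row_sum m r hr hm S).symm)
    _ = ∑ S ∈ s, ∑ T ∈ s.biUnion (nbr m r),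
          (if T ∈ nbr m r S then wt m r S.1.card T.1.card else 0) := by
        apply Finset.sum_congr rfl
        intro S hS
        rw [Finset.sum_ite_mem, Finset.inter_eq_right.mpr (Finset.subset_biUnion_of_mem _ hS)]
    _ = ∑ T ∈ s.biUnion (nbr m r), ∑ S ∈ s,
          (if T ∈ nbr m r S then wt m r S.1.card T.1.card else 0) := Finset.sum_comm
    _ ≤ ∑ T ∈ s.biUnion (nbr m r), (1 : ℚ) := by
        apply Finset.sum_le_sum
        intro T _
        calc ∑ S ∈ s, (if T ∈ nbr m r S then wt m r S.1.card T.1.card else 0)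
            ≤ ∑ S ∈ (Finset.univ : Finset (Idx m r)),
              (if T ∈ nbr m r S then wt m r S.1.card T.1.card else 0) := by
              apply Finset.sum_le_sum_of_subset_of_nonneg (Finset.subset_univ s)
              intro S _ _
              split_ifs
              · exact wt_nonneg m r _ _
              · exact le_refl 0
        _ = ∑ S ∈ Finset.univ.filter (fun S => T ∈ nbr m r S), wt m r S.1.card T.1.card :=
              (Finset.sum_filter _ _).symm
        _ = ∑ S ∈ nbr m r T, wt m r S.1.card T.1.card := by
              congr 1
              ext S
              simp only [Finset.mem_filter, Finset.mem_univ, true_and]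
              exact (nbr_symm m r S T)
        _ = 1 := col_sum m r hr hm T
    _ = ((s.biUnion (nbr m r)).card : ℚ) := by simp
  exact_mod_cast key

end Main

end Stmt8Aux

theorem stmt_8 (m r : ℕ) (hr : 1 ≤ r) (hm : r + 1 ≤ m) :
    ∃ f : {S : Finset (Fin m) // S.Nonempty ∧ S.card ≤ r} ≃
          {S : Finset (Fin m) // S.Nonempty ∧ S.card ≤ r},
      ∀ S, Disjoint S.1 (f S).1 ∧ r + 1 ≤ S.1.card + (f S).1.card := by
  obtain ⟨f, hinj, hmem⟩ :=
    (Finset.all_card_le_biUnion_card_iff_exists_injective (Stmt8Aux.nbr m r)).mp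
      (Stmt8Aux.hall_cond m r hr hm)
  have hbij : Function.Bijective f := Finite.injective_iff_bijective.mp hinj
  refine ⟨Equiv.ofBijective f hbij, ?_⟩
  intro S
  have := hmem S
  rw [Stmt8Aux.mem_nbr] at this
  exact this
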